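/- There exists a constant κ₀ ∈ [1, ∞), depending only on n, such that for every Calderón–Zygmund set R ∈ ℛ one has ρ(R*) ≤ κ₀ ρ(R), where R* = {x ∈ S : d(x, R) < r_R} is the dilated set of R and d(x, R) = inf_{y ∈ R} d(x, y). -/

import Mathlib

open MeasureTheory Set Filter
open scoped ENNReal NNReal Topology

noncomputable section

/-- The `ax+b`-group `S = ℝⁿ ⋉ ℝ`, as a measure space with its right Haar
measure `ρ`, which is Lebesgue measure `dx dt` on `ℝⁿ × ℝ`. -/
abbrev Sp (n : ℕ) : Type := (Fin n → ℝ) × ℝ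

/-- `Q` is a dyadic cube in `ℝⁿ` with side length `L` and center `c`. -/
def IsDyadicCube (n : ℕ) (Q : Set (Fin n → ℝ)) (L : ℝ) (c : Fin n → ℝ) : Prop :=
  ∃ (k : ℤ) (m : Fin n → ℤ), L = 2 ^ k ∧
    Q = {x | ∀ i, (m i : ℝ) * 2 ^ k ≤ x i ∧ x i < ((m i : ℝ) + 1) * 2 ^ k} ∧
    c = fun i => ((m i : ℝ) + 1 / 2) * 2 ^ k

/-- Admissibility of the parameters `(Q, L, c, t, r)` of a Calderón–Zygmund set:
`Q` is a dyadic cube with side length `L` and center `c`, `r > 0`, and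
`e² eᵗ r ≤ L < e⁸ eᵗ r` if `r < 1`, while `eᵗ e^{2r} ≤ L < eᵗ e^{8r}` if `r ≥ 1`. -/
def CZParam (n : ℕ) (Q : Set (Fin n → ℝ)) (L : ℝ) (c : Fin n → ℝ) (t r : ℝ) : Prop :=
  IsDyadicCube n Q L c ∧ 0 < r ∧
    (r < 1 → Real.exp 2 * Real.exp t * r ≤ L ∧ L < Real.exp 8 * Real.exp t * r) ∧
    (1 ≤ r → Real.exp t * Real.exp (2 * r) ≤ L ∧ L < Real.exp t * Real.exp (8 * r))

/-- The set `Q × [t - r, t + r)` in `S`. -/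
def czSet (n : ℕ) (Q : Set (Fin n → ℝ)) (t r : ℝ) : Set (Sp n) :=
  Q ×ˢ Set.Ico (t - r) (t + r)

/-- `R` is a Calderón–Zygmund set, i.e. a member of the family `ℛ`. -/
def IsCZSet (n : ℕ) (R : Set (Sp n)) : Prop :=
  ∃ Q L c t r, CZParam n Q L c t r ∧ R = czSet n Q t r

/-- Inverse hyperbolic cosine. -/
def arcoshR (x : ℝ) : ℝ := Real.log (x + Real.sqrt (x ^ 2 - 1))

/-- The left-invariant Riemannian (hyperbolic) metric on `S`, given by
`cosh d((x,t),(x',t')) = (e^{t'-t} + e^{t-t'} + e^{-t-t'} |x-x'|²) / 2`. -/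
def hypDist (n : ℕ) (p q : Sp n) : ℝ :=
  arcoshR ((Real.exp (q.2 - p.2) + Real.exp (p.2 - q.2) +
    Real.exp (-p.2 - q.2) * (∑ i, (p.1 i - q.1 i) ^ 2)) / 2)

/-- The open ball of center `p` and radius `r` for the hyperbolic metric. -/
def hypBall (n : ℕ) (p : Sp n) (r : ℝ) : Set (Sp n) := {q | hypDist n p q < r}

/-- The maximal function associated with a family `𝒜` of subsets of `S`:
`x ↦ sup { ρ(R)⁻¹ ∫_R |f| dρ : R ∈ 𝒜, x ∈ R }`. -/
def maximalFn (n : ℕ) (𝒜 : Set (Set (Sp n))) (f : Sp n → ℝ) (x : Sp n) : ℝ≥0∞ :=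
  ⨆ R ∈ 𝒜, ⨆ (_ : x ∈ R), (volume R)⁻¹ * ∫⁻ y in R, ‖f y‖₊ ∂volume

/-- The sharp maximal function associated with a family `𝒜` of subsets of `S`:
`x ↦ sup { ρ(R)⁻¹ ∫_R |f - f_R| dρ : R ∈ 𝒜, x ∈ R }`, where `f_R = ρ(R)⁻¹ ∫_R f dρ`. -/
def sharpFn (n : ℕ) (𝒜 : Set (Set (Sp n))) (f : Sp n → ℝ) (x : Sp n) : ℝ≥0∞ :=
  ⨆ R ∈ 𝒜, ⨆ (_ : x ∈ R), (volume R)⁻¹ *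
    ∫⁻ y in R, ENNReal.ofReal |f y - (volume R).toReal⁻¹ * ∫ z in R, f z ∂volume| ∂volume

/-- The `L^p`-norm (`p ∈ (0,∞]`) of an `ℝ≥0∞`-valued function. -/
def lpNormE {α : Type*} [MeasurableSpace α] (g : α → ℝ≥0∞) (p : ℝ≥0∞)
    (μ : Measure α) : ℝ≥0∞ :=
  if p = ∞ then essSup g μ else (∫⁻ x, g x ^ p.toReal ∂μ) ^ (1 / p.toReal)

/-- `M` is a parent of `R`: both are Calderón–Zygmund sets, `M` can be decomposed into
`k` pairwise disjoint Calderón–Zygmund sets (`k = 2` or `k = 2ⁿ`) one of which is `R`,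
and `(3/2) ρ(R) ≤ ρ(M) ≤ max{3, 2ⁿ} ρ(R)`. -/
def IsParent (n : ℕ) (M R : Set (Sp n)) : Prop :=
  IsCZSet n M ∧ IsCZSet n R ∧
    (∃ k : ℕ, (k = 2 ∨ k = 2 ^ n) ∧ ∃ Rs : Fin k → Set (Sp n),
      (∀ i, IsCZSet n (Rs i)) ∧ Pairwise (Function.onFun Disjoint Rs) ∧
      M = ⋃ i, Rs i ∧ ∃ i, Rs i = R) ∧
    (3 / 2 : ℝ≥0∞) * volume R ≤ volume M ∧
    volume M ≤ (max 3 (2 ^ n) : ℕ) * volume R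

/-- A dyadic grid on `S`: a collection `{𝒟_j}_{j ∈ ℤ}` of partitions of `S` into
pairwise disjoint Calderón–Zygmund sets with the nesting, parent, splitting and
limiting properties (i)–(v) of Theorem 3.1. -/
def IsDyadicGrid (n : ℕ) (D : ℤ → Set (Set (Sp n))) : Prop :=
  (∀ j, ∀ R ∈ D j, IsCZSet n R) ∧
  (∀ j, (D j).PairwiseDisjoint id) ∧
  (∀ j, ⋃₀ D j = Set.univ) ∧
  (∀ l k : ℤ, l ≤ k → ∀ R ∈ D l, ∀ R' ∈ D k, R ⊆ R' ∨ R ∩ R' = ∅) ∧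
  (∀ j, ∀ R ∈ D j, ∃! R', R' ∈ D (j + 1) ∧ R ⊆ R') ∧
  (∀ j, ∀ R ∈ D j, ∀ R' ∈ D (j + 1), R ⊆ R' → volume R' ≤ 2 ^ n * volume R) ∧
  (∀ j, ∀ R ∈ D j, ∃ k : ℕ, (k = 2 ∨ k = 2 ^ n) ∧ ∃ Rs : Fin k → Set (Sp n),
    (∀ i, Rs i ∈ D (j - 1)) ∧ Pairwise (Function.onFun Disjoint Rs) ∧ R = ⋃ i, Rs i ∧
    ∀ i, volume R / 2 ^ n ≤ volume (Rs i) ∧ volume (Rs i) ≤ (2 / 3 : ℝ≥0∞) * volume R) ∧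
  (∀ x : Sp n, ∀ Rx : ℤ → Set (Sp n), (∀ j, Rx j ∈ D j ∧ x ∈ Rx j) →
    Tendsto (fun j => volume (Rx j)) atBot (nhds 0) ∧
    Tendsto (fun j => volume (Rx j)) atTop (nhds ⊤))

/-- `a` is an `H¹`-atom supported in a set of the family `𝒜`: `a ∈ L¹` is supported in
some `R ∈ 𝒜`, `‖a‖_∞ ≤ ρ(R)⁻¹` and `∫_S a dρ = 0`. -/
def IsAtomIn (n : ℕ) (𝒜 : Set (Set (Sp n))) (a : Sp n → ℂ) : Prop :=
  ∃ R ∈ 𝒜, Function.support a ⊆ R ∧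
    (∀ᵐ x ∂(volume : Measure (Sp n)), ‖a x‖ ≤ (volume R).toReal⁻¹) ∧
    Integrable a volume ∧ ∫ x, a x ∂(volume : Measure (Sp n)) = 0

/-- `g = ∑_j lam_j a_j` is an atomic decomposition of `g` with atoms supported in sets of
the family `𝒜`: the `a_j` are atoms, `∑_j |lam_j| < ∞` and the series converges to `g`
in `L¹`. -/
def IsAtomicDecomp (n : ℕ) (𝒜 : Set (Set (Sp n))) (g : Sp n → ℂ)
    (lam : ℕ → ℂ) (a : ℕ → Sp n → ℂ) : Prop :=
  Integrable g volume ∧ (∀ j, IsAtomIn n 𝒜 (a j)) ∧ Summable (fun j => ‖lam j‖) ∧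
    Tendsto (fun N => ∫ x, ‖g x - ∑ j ∈ Finset.range N, lam j * a j x‖ ∂volume)
      atTop (nhds 0)

/-- The atomic `H¹`-norm of `g` associated with the family `𝒜`: the infimum of
`∑_j |lam_j|` over all atomic decompositions of `g` with atoms supported in sets of `𝒜`. -/
def H1Norm (n : ℕ) (𝒜 : Set (Set (Sp n))) (g : Sp n → ℂ) : ℝ :=
  sInf {s : ℝ | ∃ lam a, IsAtomicDecomp n 𝒜 g lam a ∧ s = ∑' j, ‖lam j‖}

end

noncomputable section

lemma aux_arcosh_le {u r : ℝ} (hu : 1 ≤ u) (h : arcoshR u < r) :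
    u ≤ Real.cosh r := by
  have h1 : (0:ℝ) ≤ u^2 - 1 := by nlinarith
  have hs0 : 0 ≤ Real.sqrt (u^2 - 1) := Real.sqrt_nonneg _
  have hsq : Real.sqrt (u^2-1) ^ 2 = u^2 - 1 := Real.sq_sqrt h1
  have h0 : (0:ℝ) < u + Real.sqrt (u^2 - 1) := by linarith
  have hlt : u + Real.sqrt (u^2 - 1) < Real.exp r := by
    rw [arcoshR] at h
    exact (Real.log_lt_iff_lt_exp h0).mp h
  set w := Real.exp r with hw
  have hw0 : 0 < w := Real.exp_pos r
  have h2 : Real.sqrt (u^2-1) ≤ w - u := by linarith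
  have h3 : Real.sqrt (u^2-1) * Real.sqrt (u^2-1) ≤ (w - u) * (w - u) :=
    mul_le_mul h2 h2 hs0 (by linarith)
  have key : 2 * u * w ≤ w^2 + 1 := by nlinarith [h3, hsq]
  have h4 : u ≤ (w^2+1)/(2*w) := by
    rw [le_div_iff₀ (by positivity)]; linarith
  have h5 : (w^2+1)/(2*w) = (w + w⁻¹)/2 := by field_simp
  rw [Real.cosh_eq, Real.exp_neg, ← hw]
  rw [h5] at h4; exact h4

lemma aux_two_le {a b : ℝ} (ha : 0 < a) (hab : a * b = 1) : 2 ≤ a + b := by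
  nlinarith [sq_nonneg (a - 1)]

lemma aux_S_le {E S C X : ℝ} (hE : 0 < E) (hC : 0 ≤ C) (h1 : E * S ≤ C)
    (h2 : E * X = 1) : S ≤ C * X := by
  have h3 : E * S * X = S * (E * X) := by ring
  have hX0 : 0 ≤ X := by nlinarith
  calc S = E * S * X := by rw [h3, h2, mul_one]
    _ ≤ C * X := mul_le_mul_of_nonneg_right h1 hX0

lemma aux_caseA {r t L S : ℝ} (hr : 0 < r) (hr1 : r < 1)
    (hLlo : Real.exp 2 * Real.exp t * r ≤ L)
    (hS2 : S ≤ (3/2) * r^2 * (Real.exp (2*t) * Real.exp (3*r))) :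
    S ≤ 4 * L^2 := by
  have he3r : Real.exp (3*r) ≤ Real.exp 3 := Real.exp_le_exp.mpr (by linarith)
  have hA : (3/2) * r^2 * (Real.exp (2*t) * Real.exp (3*r))
      ≤ (3/2) * r^2 * (Real.exp (2*t) * Real.exp 3) :=
    mul_le_mul_of_nonneg_left
      (mul_le_mul_of_nonneg_left he3r (Real.exp_pos (2*t)).le) (by positivity)
  have h0 : (0:ℝ) ≤ Real.exp 2 * Real.exp t * r := by positivity
  have hL2 : Real.exp 2 * Real.exp t * r * (Real.exp 2 * Real.exp t * r)
      ≤ L * L := mul_le_mul hLlo hLlo h0 (h0.trans hLlo)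
  have h2t : Real.exp (2*t) = Real.exp t * Real.exp t := by
    rw [← Real.exp_add]; congr 1; ring
  have h22 : Real.exp 2 * Real.exp 2 = Real.exp 3 * Real.exp 1 := by
    rw [← Real.exp_add, ← Real.exp_add]; norm_num
  have he1 : (2:ℝ) ≤ Real.exp 1 := by linarith [Real.add_one_le_exp 1]
  have hpos2 : (0:ℝ) ≤ Real.exp 3 * (Real.exp t * Real.exp t) * r^2 := by positivity
  have hprod : 0 ≤ (Real.exp 1 - 2) *
      (Real.exp 3 * (Real.exp t * Real.exp t) * r^2) :=
    mul_nonneg (by linarith) hpos2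
  have hA' : (3/2) * r^2 * (Real.exp (2*t) * Real.exp (3*r))
      ≤ (3/2) * r^2 * ((Real.exp t * Real.exp t) * Real.exp 3) := by
    rw [← h2t]; exact hA
  have h22' : Real.exp 2 * Real.exp 2 * ((Real.exp t * Real.exp t) * r^2)
      = Real.exp 3 * Real.exp 1 * ((Real.exp t * Real.exp t) * r^2) := by
    rw [h22]
  have hmid : (3/2) * r^2 * ((Real.exp t * Real.exp t) * Real.exp 3)
      ≤ 4 * (Real.exp 2 * Real.exp t * r * (Real.exp 2 * Real.exp t * r)) := by
    nlinarith [hprod, hpos2, h22']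
  nlinarith [hS2, hA', hmid, hL2]

lemma aux_caseB {r t L S : ℝ} (hr1 : 1 ≤ r)
    (hLlo : Real.exp t * Real.exp (2*r) ≤ L)
    (hS2 : S ≤ 2 * (Real.exp (2*t) * Real.exp (4*r))) :
    S ≤ 4 * L^2 := by
  have h0 : (0:ℝ) ≤ Real.exp t * Real.exp (2*r) := by positivity
  have hL2 : Real.exp t * Real.exp (2*r) * (Real.exp t * Real.exp (2*r))
      ≤ L * L := mul_le_mul hLlo hLlo h0 (h0.trans hLlo)
  have hkey : Real.exp (2*t) * Real.exp (4*r)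
      = Real.exp t * Real.exp (2*r) * (Real.exp t * Real.exp (2*r)) := by
    rw [← Real.exp_add, ← Real.exp_add, ← Real.exp_add]; congr 1; ring
  nlinarith [hS2, hL2, hkey]


end

set_option maxHeartbeats 1000000 in
/-- There exists `κ₀ ∈ [1, ∞)`, depending only on `n`, such that for every
Calderón–Zygmund set `R ∈ ℛ` one has `ρ(R*) ≤ κ₀ ρ(R)`, where
`R* = {x ∈ S : d(x, R) < r_R}` is the dilated set of `R`. -/
theorem exists_kappa_volume_dilated_le (n : ℕ) (hn : 1 ≤ n) :
    ∃ κ₀ : ℝ, 1 ≤ κ₀ ∧ ∀ (Q : Set (Fin n → ℝ)) (L : ℝ) (c : Fin n → ℝ) (t r : ℝ),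
      CZParam n Q L c t r →
        volume {x : Sp n | ∃ y ∈ czSet n Q t r, hypDist n x y < r}
          ≤ ENNReal.ofReal κ₀ * volume (czSet n Q t r) := by
  refine ⟨2 * 5 ^ n, ?_, ?_⟩
  · have h5 : (1:ℝ) ≤ 5 ^ n := one_le_pow₀ (by norm_num)
    linarith
  intro Q L c t r hcz
  obtain ⟨⟨k, m, hL, hQ, hc⟩, hr, hcase1, hcase2⟩ := hcz
  have hL0 : 0 < L := by rw [hL]; positivity
  -- volume of Q
  have hQpi : Q = Set.pi Set.univ
      (fun i => Set.Ico ((m i : ℝ) * 2^k) (((m i : ℝ)+1) * 2^k)) := by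
    rw [hQ]; ext x; simp [Set.mem_pi, Set.mem_Ico]
  have hside : ∀ i : Fin n, ((m i:ℝ)+1) * 2^k - (m i:ℝ) * 2^k = L := by
    intro i; rw [hL]; ring
  have hvolQ : volume Q = ENNReal.ofReal L ^ n := by
    calc volume Q = ∏ i : Fin n, ENNReal.ofReal L := by
          rw [hQpi, volume_pi_pi]
          exact Finset.prod_congr rfl (fun i _ => by rw [Real.volume_Ico, hside i])
      _ = ENNReal.ofReal L ^ n := by
          rw [Finset.prod_const, Finset.card_univ, Fintype.card_fin]
  have hvolR : volume (czSet n Q t r)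
      = ENNReal.ofReal L ^ n * ENNReal.ofReal (2*r) := by
    rw [czSet, Measure.volume_eq_prod, Measure.prod_prod, hvolQ, Real.volume_Ico]
    congr 2; ring
  -- the enlarged product set
  set T : Set (Sp n) := (Set.pi Set.univ fun i =>
      Set.Icc (c i - 5*L/2) (c i + 5*L/2)) ×ˢ Set.Icc (t - 2*r) (t + 2*r) with hT
  have hvolT : volume T = ENNReal.ofReal (5*L) ^ n * ENNReal.ofReal (4*r) := by
    have h1 : ∀ i : Fin n,
        volume (Set.Icc (c i - 5*L/2) (c i + 5*L/2)) = ENNReal.ofReal (5*L) := by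
      intro i; rw [Real.volume_Icc]; congr 1; ring
    rw [hT, Measure.volume_eq_prod, Measure.prod_prod, volume_pi_pi, Real.volume_Icc]
    rw [Finset.prod_congr rfl (fun i _ => h1 i), Finset.prod_const, Finset.card_univ,
      Fintype.card_fin]
    congr 2; ring
  -- the inclusion
  have hsub : {x : Sp n | ∃ y ∈ czSet n Q t r, hypDist n x y < r} ⊆ T := by
    rintro x ⟨y, hy, hd⟩
    obtain ⟨hyQ, hyI⟩ := hy
    simp only [Set.mem_Ico] at hyI
    simp only [hypDist] at hd
    set a := Real.exp (y.2 - x.2) with ha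
    set b := Real.exp (x.2 - y.2) with hb
    set E := Real.exp (-x.2 - y.2) with hE
    set S := ∑ i, (x.1 i - y.1 i)^2 with hSdef
    have ha0 : 0 < a := Real.exp_pos _
    have hb0 : 0 < b := Real.exp_pos _
    have hE0 : 0 < E := Real.exp_pos _
    have hS0 : 0 ≤ S := Finset.sum_nonneg (fun i _ => sq_nonneg _)
    have hba : a * b = 1 := by rw [ha, hb, ← Real.exp_add]; ring_nf; exact Real.exp_zero
    have hab2 : 2 ≤ a + b := aux_two_le ha0 hba
    have hu1 : 1 ≤ (a + b + E * S)/2 := by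
      have := mul_nonneg hE0.le hS0; linarith
    have hcosh : (a + b + E * S)/2 ≤ Real.cosh r := aux_arcosh_le hu1 hd
    -- bound on |x.2 - y.2|
    have hcoshd : Real.cosh (x.2 - y.2) = (b + a)/2 := by
      rw [Real.cosh_eq]
      have h' : Real.exp (-(x.2 - y.2)) = a := by rw [ha]; congr 1; ring
      rw [h']
    have hcc : Real.cosh (x.2 - y.2) ≤ Real.cosh r := by
      have := mul_nonneg hE0.le hS0
      rw [hcoshd]; linarith
    have habs : |x.2 - y.2| ≤ r := by
      have h' := Real.cosh_le_cosh.mp hcc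
      rwa [abs_of_pos hr] at h'
    obtain ⟨habs1, habs2⟩ := abs_le.mp habs
    -- bound on S
    have hone : (1:ℝ) ≤ Real.cosh (x.2 - y.2) := Real.one_le_cosh _
    have hES : E * S ≤ 2 * (Real.cosh r - 1) := by
      rw [hcoshd] at hone hcc; linarith
    have hEe : E * Real.exp (x.2 + y.2) = 1 := by
      rw [hE, ← Real.exp_add]; ring_nf; exact Real.exp_zero
    have hSb : S ≤ 2 * (Real.cosh r - 1) * Real.exp (x.2 + y.2) :=
      aux_S_le hE0 (by linarith) hES hEe
    have hxy2 : x.2 + y.2 ≤ 2*t + 3*r := by linarith [hyI.2]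
    have hem : Real.exp (x.2 + y.2) ≤ Real.exp (2*t + 3*r) := Real.exp_le_exp.mpr hxy2
    have hcr0 : (0:ℝ) ≤ Real.cosh r - 1 := by linarith [Real.one_le_cosh r]
    have he3 : Real.exp (2*t + 3*r) = Real.exp (2*t) * Real.exp (3*r) := by
      rw [← Real.exp_add]
    have hSL : S ≤ 4 * L^2 := by
      rcases lt_or_ge r 1 with hr1 | hr1
      · obtain ⟨hLlo, -⟩ := hcase1 hr1
        -- cosh r - 1 ≤ (3/4) r²
        have hrabs : |r| ≤ 1 := by rw [abs_of_pos hr]; linarith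
        have hb1 := Real.exp_bound hrabs (n := 2) (by norm_num)
        have hb2 := Real.exp_bound (x := -r) (by rwa [abs_neg]) (n := 2) (by norm_num)
        simp only [Finset.sum_range_succ, Finset.sum_range_zero] at hb1 hb2
        norm_num at hb1 hb2
        have hbu1 : Real.exp r ≤ 1 + r + (3/4) * r^2 := by
          have h' := (abs_le.mp hb1).2; linarith
        have hbu2 : Real.exp (-r) ≤ 1 - r + (3/4) * r^2 := by
          have h' := (abs_le.mp hb2).2; linarith
        have hcr : Real.cosh r - 1 ≤ (3/4) * r^2 := by
          rw [Real.cosh_eq]; linarith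
        have hS2 : S ≤ (3/2) * r^2 * (Real.exp (2*t) * Real.exp (3*r)) := by
          calc S ≤ 2 * (Real.cosh r - 1) * Real.exp (x.2 + y.2) := hSb
            _ ≤ 2 * (Real.cosh r - 1) * Real.exp (2*t + 3*r) :=
                mul_le_mul_of_nonneg_left hem (by linarith)
            _ ≤ 2 * ((3/4) * r^2) * Real.exp (2*t + 3*r) :=
                mul_le_mul_of_nonneg_right (by linarith) (Real.exp_pos _).le
            _ = (3/2) * r^2 * (Real.exp (2*t) * Real.exp (3*r)) := by
                rw [he3]; ring
        exact aux_caseA hr hr1 hLlo hS2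
      · obtain ⟨hLlo, -⟩ := hcase2 hr1
        have hcr : Real.cosh r - 1 ≤ Real.exp r := by
          have hneg : Real.exp (-r) ≤ Real.exp r := Real.exp_le_exp.mpr (by linarith)
          rw [Real.cosh_eq]; linarith
        have emerge : Real.exp r * Real.exp (2*t + 3*r)
            = Real.exp (2*t) * Real.exp (4*r) := by
          rw [← Real.exp_add, ← Real.exp_add]; congr 1; ring
        have hS2 : S ≤ 2 * (Real.exp (2*t) * Real.exp (4*r)) := by
          calc S ≤ 2 * (Real.cosh r - 1) * Real.exp (x.2 + y.2) := hSb
            _ ≤ 2 * (Real.cosh r - 1) * Real.exp (2*t + 3*r) :=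
                mul_le_mul_of_nonneg_left hem (by linarith)
            _ ≤ 2 * Real.exp r * Real.exp (2*t + 3*r) :=
                mul_le_mul_of_nonneg_right (by linarith) (Real.exp_pos _).le
            _ = 2 * (Real.exp (2*t) * Real.exp (4*r)) := by
                rw [mul_assoc, emerge]
        exact aux_caseB hr1 hLlo hS2
    -- conclude membership in T
    rw [hT]
    refine Set.mem_prod.mpr ⟨?_, ?_⟩
    · intro i _
      have hsq_i : (x.1 i - y.1 i)^2 ≤ S :=
        Finset.single_le_sum (f := fun j => (x.1 j - y.1 j)^2)
          (fun j _ => sq_nonneg _) (Finset.mem_univ i)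
      have hds : (x.1 i - y.1 i)^2 ≤ (2*L)^2 := by linarith [hsq_i, hSL]
      have habsd : |x.1 i - y.1 i| ≤ 2*L := by
        have h' := Real.sqrt_le_sqrt hds
        rwa [Real.sqrt_sq_eq_abs, Real.sqrt_sq (by positivity)] at h'
      obtain ⟨hd1, hd2⟩ := abs_le.mp habsd
      rw [hQ] at hyQ
      obtain ⟨e1, e2⟩ := hyQ i
      have hci : c i = ((m i:ℝ) + 1/2) * 2^k := by rw [hc]
      have hLk : L = (2:ℝ)^k := hL
      simp only [Set.mem_Icc]
      constructor
      · linarith [hd1, e1, hci.le, hci.ge, hLk.le, hLk.ge]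
      · linarith [hd2, e2, hci.le, hci.ge, hLk.le, hLk.ge]
    · simp only [Set.mem_Icc]
      constructor
      · linarith [hyI.1]
      · linarith [hyI.2]
  calc volume {x : Sp n | ∃ y ∈ czSet n Q t r, hypDist n x y < r}
      ≤ volume T := measure_mono hsub
    _ = ENNReal.ofReal (5*L) ^ n * ENNReal.ofReal (4*r) := hvolT
    _ = ENNReal.ofReal (2 * 5^n) * volume (czSet n Q t r) := by
        have e1 : ENNReal.ofReal (5*L) = ENNReal.ofReal 5 * ENNReal.ofReal L :=
          ENNReal.ofReal_mul (by norm_num)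
        have e2 : ENNReal.ofReal (4*r) = ENNReal.ofReal 2 * ENNReal.ofReal (2*r) := by
          rw [show (4:ℝ)*r = 2*(2*r) by ring,
            ENNReal.ofReal_mul (by norm_num : (0:ℝ) ≤ 2)]
        have e3 : ENNReal.ofReal (2 * 5^n : ℝ)
            = ENNReal.ofReal 2 * ENNReal.ofReal 5 ^ n := by
          rw [ENNReal.ofReal_mul (by norm_num : (0:ℝ) ≤ 2),
            ENNReal.ofReal_pow (by norm_num : (0:ℝ) ≤ 5)]
        rw [hvolR, e1, e2, e3]; ring
    _ ≤ ENNReal.ofReal (2 * 5^n) * volume (czSet n Q t r) := le_rfl
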